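/- Let l = (l₁,…,lₙ) ∈ ℤⁿ with gcd(l₁,…,lₙ) = 1, and let E = {x ∈ ℝⁿ : l·x ∈ ℤ}. Let δ be the ℓ^∞-distance from (1/2)·𝟙 to E. Then δ = 0 if ‖l‖₁ = ∑|lᵢ| is even, and δ = 1/(2‖l‖₁) if ‖l‖₁ is odd. -/

import Mathlib

theorem stmt_4 (n : ℕ) (l : Fin n → ℤ) (hgcd : Finset.univ.gcd l = 1)
    (E : Set (Fin n → ℝ))
    (hE : E = {x | ∃ z : ℤ, ∑ i, (l i : ℝ) * x i = z})
    (δ : ℝ) (hδ : δ = Metric.infDist (fun _ => (1/2 : ℝ)) E) :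
    (Even (∑ i, (l i).natAbs) → δ = 0) ∧
    (Odd (∑ i, (l i).natAbs) → δ = 1 / (2 * ∑ i, ((l i).natAbs : ℝ))) := by
  subst hE hδ
  have hdiff : Even (∑ i, (|l i| - l i)) := by
    apply Finset.even_sum
    intro i _
    rcases abs_cases (l i) with ⟨h, _⟩ | ⟨h, _⟩ <;> rw [h]
    · simp
    · exact ⟨-(l i), by ring⟩
  have hdiff' : Even ((∑ i, |l i|) - ∑ i, l i) := by
    rwa [← Finset.sum_sub_distrib]
  have habs : ((∑ i, (l i).natAbs : ℕ) : ℤ) = ∑ i, |l i| := by push_cast; rfl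
  constructor
  · intro hev
    have h1 : Even (∑ i, |l i|) := by
      rw [← habs]; exact_mod_cast hev
    have h2 : Even (∑ i, l i) := (Int.even_sub.mp hdiff').mp h1
    obtain ⟨k, hk⟩ := h2
    have hmem : (fun _ => (1/2 : ℝ)) ∈ {x : Fin n → ℝ | ∃ z : ℤ, ∑ i, (l i : ℝ) * x i = z} := by
      refine ⟨k, ?_⟩
      simp only [mul_one_div]
      rw [← Finset.sum_div]
      have : (∑ i, (l i : ℝ)) = ((∑ i, l i : ℤ) : ℝ) := by push_cast; rfl
      rw [this, hk]; push_cast; ring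
    exact Metric.infDist_zero_of_mem hmem
  · intro hodd
    have h1 : Odd (∑ i, |l i|) := by
      rw [← habs]; exact_mod_cast hodd
    have hm : Odd (∑ i, l i) := by
      rw [← Int.not_even_iff_odd] at h1 ⊢
      exact fun h => h1 ((Int.even_sub.mp hdiff').mpr h)
    set L : ℝ := ∑ i, ((l i).natAbs : ℝ) with hLdef
    have hLcast : L = ((∑ i, (l i).natAbs : ℕ) : ℝ) := by push_cast; rfl
    have hLpos : 0 < L := by
      rw [hLcast]
      have hne : (∑ i, (l i).natAbs) ≠ 0 := by
        intro h; rw [Nat.odd_iff, h] at hodd; exact absurd hodd (by norm_num)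
      positivity
    obtain ⟨k, hk⟩ := hm
    have hsum_half : ∑ i, (l i : ℝ) * (1/2) = ((∑ i, l i : ℤ) : ℝ) / 2 := by
      simp only [mul_one_div]
      rw [← Finset.sum_div]
      push_cast; rfl
    have hEne : ({x : Fin n → ℝ | ∃ z : ℤ, ∑ i, (l i : ℝ) * x i = z}).Nonempty :=
      ⟨0, 0, by simp⟩
    have hlow : ∀ y ∈ {x : Fin n → ℝ | ∃ z : ℤ, ∑ i, (l i : ℝ) * x i = z},
        1 / (2 * L) ≤ dist (fun _ => (1/2 : ℝ)) y := by
      rintro y ⟨z, hz⟩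
      have hkey : (1:ℝ) ≤ |2 * (z:ℝ) - ((∑ i, l i : ℤ) : ℝ)| := by
        have hne : (2 * z - ∑ i, l i) ≠ 0 := by
          intro h
          have : Even (∑ i, l i) := ⟨z, by omega⟩
          rw [← Int.not_odd_iff_even] at this
          exact this ⟨k, hk⟩
        have h1' : (1:ℤ) ≤ |2 * z - ∑ i, l i| := Int.one_le_abs hne
        exact_mod_cast h1'
      have hchain : |(z:ℝ) - ((∑ i, l i : ℤ) : ℝ)/2| ≤ L * dist (fun _ => (1/2:ℝ)) y := by
        have he : (z:ℝ) - ((∑ i, l i : ℤ) : ℝ)/2 = ∑ i, (l i : ℝ) * (y i - 1/2) := by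
          rw [← hz, ← hsum_half, ← Finset.sum_sub_distrib]
          congr 1; ext i; ring
        rw [he]
        calc |∑ i, (l i : ℝ) * (y i - 1/2)| ≤ ∑ i, |(l i : ℝ) * (y i - 1/2)| :=
              Finset.abs_sum_le_sum_abs _ _
          _ = ∑ i, |(l i : ℝ)| * |y i - 1/2| := by simp [abs_mul]
          _ ≤ ∑ i, |(l i : ℝ)| * dist (fun _ => (1/2:ℝ)) y := by
              apply Finset.sum_le_sum
              intro i _
              apply mul_le_mul_of_nonneg_left _ (abs_nonneg _)
              have hd := dist_le_pi_dist (fun _ => (1/2:ℝ)) y i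
              rw [Real.dist_eq] at hd
              rw [show |y i - 1/2| = |(1/2 : ℝ) - y i| by rw [abs_sub_comm]]
              exact hd
          _ = L * dist (fun _ => (1/2:ℝ)) y := by
              rw [← Finset.sum_mul, hLdef]
              congr 1
              apply Finset.sum_congr rfl
              intro i _
              rw [Nat.cast_natAbs, Int.cast_abs]
      have h12 : (1:ℝ)/2 ≤ |(z:ℝ) - ((∑ i, l i : ℤ) : ℝ)/2| := by
        rw [show (z:ℝ) - ((∑ i, l i : ℤ) : ℝ)/2 = (2 * (z:ℝ) - ((∑ i, l i : ℤ) : ℝ))/2 by ring,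
          abs_div, abs_of_pos (by norm_num : (0:ℝ) < 2)]
        linarith
      have hfin := h12.trans hchain
      rw [div_le_iff₀ (by positivity : (0:ℝ) < 2 * L)]
      nlinarith [hfin]
    have hgoal : Metric.infDist (fun _ => (1/2 : ℝ))
        {x : Fin n → ℝ | ∃ z : ℤ, ∑ i, (l i : ℝ) * x i = z} = 1 / (2 * L) := by
      apply le_antisymm
      · -- upper bound
        set x : Fin n → ℝ := fun i => 1/2 + ((l i).sign : ℝ) / (2 * L) with hx
        have hxmem : x ∈ {x : Fin n → ℝ | ∃ z : ℤ, ∑ i, (l i : ℝ) * x i = z} := by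
          refine ⟨k + 1, ?_⟩
          have hsum : ∑ i, (l i : ℝ) * x i
              = ∑ i, (l i : ℝ) * (1/2) + (∑ i, ((l i * (l i).sign : ℤ) : ℝ)) / (2 * L) := by
            rw [Finset.sum_div, ← Finset.sum_add_distrib]
            apply Finset.sum_congr rfl
            intro i _
            push_cast; ring
          have habsL : (∑ i, ((l i * (l i).sign : ℤ) : ℝ)) = L := by
            rw [hLdef]
            apply Finset.sum_congr rfl
            intro i _
            rw [Int.mul_sign_self]
            simp [Nat.cast_natAbs]
          rw [hsum, habsL, hsum_half, hk]
          push_cast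
          field_simp
          ring
        refine le_trans (Metric.infDist_le_dist_of_mem hxmem) ?_
        apply (dist_pi_le_iff (by positivity)).mpr
        intro i
        simp only [hx, Real.dist_eq]
        rw [show (1/2 : ℝ) - (1/2 + ((l i).sign : ℝ) / (2*L)) = -(((l i).sign : ℝ) / (2*L)) by ring]
        rw [abs_neg, abs_div, abs_of_pos (by positivity : (0:ℝ) < 2*L)]
        have hs : |((l i).sign : ℝ)| ≤ 1 := by
          have : |(l i).sign| ≤ 1 := by
            rcases eq_or_ne (l i) 0 with h | h
            · simp [h]
            · rw [Int.abs_sign_of_ne_zero h]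
          calc |((l i).sign : ℝ)| = ((|(l i).sign| : ℤ) : ℝ) := Int.cast_abs.symm
            _ ≤ 1 := by exact_mod_cast this
        exact div_le_div_of_nonneg_right hs (by positivity) |>.trans (le_of_eq rfl)
      · -- lower bound
        by_contra hcon
        push_neg at hcon
        obtain ⟨y, hy, hdy⟩ := (Metric.infDist_lt_iff hEne).mp hcon
        exact absurd hdy (not_lt.mpr (hlow y hy))
    rw [hgoal]
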